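/- Let g, γ ∈ W(ℝ^d) with ⟨γ,g⟩ ≠ 0 and G_a(x) = (a^d/⟨γ,g⟩) ∑_{k∈ℤ^d} ḡ(x−ak) γ(x−ak). Assume lim_{a→0} ‖(G_a − 1)h‖_2 = 0 for all h ∈ L^2(ℝ^d). Then for every 1 ≤ p < ∞ and every f ∈ L^p(ℝ^d), lim_{a→0} ‖(G_a − 1)f‖_p = 0. -/

import Mathlib

open MeasureTheory ENNReal

noncomputable section

/-- Coercion of a lattice point `k ∈ ℤ^d` to `ℝ^d`. -/
def zVec {d : ℕ} (k : Fin d → ℤ) : Fin d → ℝ := fun i => (k i : ℝ)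

/-- The unit cube `Q = [0,1)^d` translated by `k ∈ ℤ^d`. -/
def block (d : ℕ) (k : Fin d → ℤ) : Set (Fin d → ℝ) :=
  {x | ∀ i, (k i : ℝ) ≤ x i ∧ x i < (k i : ℝ) + 1}

/-- `‖f · T_k χ_Q‖_p`, the local `L^p` norm of `f` on the cube `k + Q`. -/
def blockNorm (d : ℕ) (p : ℝ≥0∞) (f : (Fin d → ℝ) → ℂ) (k : Fin d → ℤ) : ℝ≥0∞ :=
  eLpNorm ((block d k).indicator f) p volume

/-- The Wiener space norm `‖f‖_{W(ℝ^d)} = ∑_{k∈ℤ^d} ‖f·T_k χ_Q‖_∞`. -/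
def wienerNorm (d : ℕ) (f : (Fin d → ℝ) → ℂ) : ℝ≥0∞ :=
  ∑' k : Fin d → ℤ, blockNorm d ∞ f k

/-- The Wiener amalgam norm `‖f‖_{W(L^p,ℓ^q)} = (∑_{k∈ℤ^d} ‖f·T_k χ_Q‖_p^q)^{1/q}`,
with the supremum in place of the sum when `q = ∞`. -/
def amalgamNorm (d : ℕ) (p q : ℝ≥0∞) (f : (Fin d → ℝ) → ℂ) : ℝ≥0∞ :=
  if q = ∞ then ⨆ k : Fin d → ℤ, blockNorm d p f k
  else (∑' k : Fin d → ℤ, blockNorm d p f k ^ q.toReal) ^ (1 / q.toReal)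

/-- `G_a(x) = (a^d/⟨γ,g⟩) ∑_{k∈ℤ^d} ḡ(x − ak) γ(x − ak)`. -/
def Ga {d : ℕ} (g γ : (Fin d → ℝ) → ℂ) (a : ℝ) (x : Fin d → ℝ) : ℂ :=
  ((a:ℂ) ^ d / ∫ t, γ t * (starRingEnd ℂ) (g t)) *
    ∑' k : Fin d → ℤ, (starRingEnd ℂ) (g (x - a • zVec k)) * γ (x - a • zVec k)

/-! ### Auxiliary lemmas -/

lemma measurable_tsum_complex {α : Type*} [MeasurableSpace α] {ι : Type*} [Countable ι]
    (u : ι → α → ℂ) (hu : ∀ i, Measurable (u i)) :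
    Measurable (fun x => ∑' i, u i x) := by
  classical
  obtain ⟨e⟩ := nonempty_encodable ι
  set w : ℕ → α → ℂ := fun n x => (Encodable.decode₂ ι n).elim 0 (fun i => u i x) with hw
  have hwm : ∀ n, Measurable (w n) := by
    intro n
    rcases h : Encodable.decode₂ ι n with _ | i
    · simpa [hw, h] using measurable_const
    · simpa [hw, h] using hu i
  have hsupp : ∀ x, Function.support (fun n => w n x) ⊆ Set.range (Encodable.encode : ι → ℕ) := by
    intro x n hn
    rcases h : Encodable.decode₂ ι n with _ | i
    · simp [hw, h] at hn
    · exact ⟨i, Encodable.mem_decode₂.mp h⟩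
  have hcomp : ∀ x i, w (Encodable.encode i) x = u i x := by
    intro x i
    simp [hw, Encodable.decode₂_encode]
  have h1 : ∀ x, ∑' n, w n x = ∑' i, u i x := by
    intro x
    rw [← Function.Injective.tsum_eq (Encodable.encode_injective (α := ι)) (hsupp x)]
    exact tsum_congr (fun i => hcomp x i)
  have h2 : ∀ x, (Summable fun n => w n x) ↔ Summable fun i => u i x := by
    intro x
    have h0 : ∀ n ∉ Set.range (Encodable.encode : ι → ℕ), w n x = 0 := by
      intro n hn
      by_contra h
      exact hn (hsupp x (by simpa [Function.mem_support] using h))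
    rw [← Function.Injective.summable_iff (Encodable.encode_injective (α := ι)) h0]
    exact summable_congr (fun i => hcomp x i)
  set S : Set α := {x | (∑' n, (‖w n x‖₊ : ℝ≥0∞)) ≠ ∞} with hS
  have hSm : MeasurableSet S := by
    have : Measurable fun x => ∑' n, (‖w n x‖₊ : ℝ≥0∞) :=
      Measurable.ennreal_tsum (fun n => (hwm n).nnnorm.coe_nnreal_ennreal)
    exact (this (measurableSet_singleton ∞)).compl
  have hSiff : ∀ x, x ∈ S ↔ Summable fun n => w n x := by
    intro x
    rw [hS, Set.mem_setOf_eq, tsum_coe_ne_top_iff_summable]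
    constructor
    · intro h
      exact summable_norm_iff.mp (by simpa using NNReal.summable_coe.mpr h)
    · intro h
      have : Summable fun n => ‖w n x‖ := h.norm
      exact NNReal.summable_coe.mp (by simpa using this)
  set G : ℕ → α → ℂ := fun n => S.indicator (fun x => ∑ k ∈ Finset.range n, w k x) with hG
  have hGm : ∀ n, Measurable (G n) :=
    fun n => (Finset.measurable_sum _ (fun k _ => hwm k)).indicator hSm
  apply measurable_of_tendsto_metrizable hGm
  rw [tendsto_pi_nhds]
  intro x
  by_cases hx : x ∈ S
  · have hsum : Summable fun n => w n x := (hSiff x).mp hx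
    have := hsum.hasSum.tendsto_sum_nat
    rw [h1 x] at this
    simpa [hG, Set.indicator_of_mem hx] using this
  · have hns : ¬ Summable fun i => u i x := fun h => hx ((hSiff x).mpr ((h2 x).mpr h))
    simp only [hG, Set.indicator_of_notMem hx]
    rw [tsum_eq_zero_of_not_summable hns]
    exact tendsto_const_nhds

lemma enorm_tsum_le {ι : Type*} (v : ι → ℂ) :
    (‖∑' i, v i‖₊ : ℝ≥0∞) ≤ ∑' i, (‖v i‖₊ : ℝ≥0∞) := by
  by_cases h : ∑' i, (‖v i‖₊ : ℝ≥0∞) = ∞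
  · exact h ▸ le_top
  · have hs : Summable fun i => ‖v i‖₊ := tsum_coe_ne_top_iff_summable.mp h
    calc (‖∑' i, v i‖₊ : ℝ≥0∞) ≤ (↑(∑' i, ‖v i‖₊) : ℝ≥0∞) := by
          exact_mod_cast nnnorm_tsum_le hs
      _ = ∑' i, (‖v i‖₊ : ℝ≥0∞) := ENNReal.coe_tsum hs

lemma tsum_comp_le {ι κ : Type*} (φ : ι → κ) (H : κ → ℝ≥0∞) (N : ℕ)
    (hfib : ∀ m, ∃ s : Finset ι, {k | φ k = m} ⊆ ↑s ∧ s.card ≤ N) :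
    ∑' k, H (φ k) ≤ N * ∑' m, H m := by
  rw [← tsum_fiberwise (fun k => H (φ k)) φ]
  rw [← ENNReal.tsum_mul_left]
  refine ENNReal.tsum_le_tsum (fun m => ?_)
  obtain ⟨s, hsub, hcard⟩ := hfib m
  have hfin : (φ ⁻¹' {m}).Finite := s.finite_toSet.subset (by
    intro k hk; exact hsub (by simpa using hk))
  haveI := hfin.fintype
  have h1 : ∑' (k : ↑(φ ⁻¹' {m})), H (φ ↑k) = (Fintype.card ↑(φ ⁻¹' {m})) * H m := by
    rw [tsum_fintype]
    have : ∀ k : ↑(φ ⁻¹' {m}), H (φ ↑k) = H m := fun k => by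
      have := k.2; simp only [Set.mem_preimage, Set.mem_singleton_iff] at this
      rw [this]
    rw [Finset.sum_congr rfl (fun k _ => this k), Finset.sum_const, Finset.card_univ,
      nsmul_eq_mul]
  rw [h1]
  have hcard2 : Fintype.card ↑(φ ⁻¹' {m}) ≤ N := by
    have hsub' : φ ⁻¹' {m} ⊆ ↑s := by intro k hk; exact hsub (by simpa using hk)
    have h2 := Finset.card_le_card ((Set.Finite.toFinset_subset (hs := hfin)).mpr hsub')
    rw [hfin.card_toFinset] at h2
    exact h2.trans hcard
  exact mul_le_mul_left (by exact_mod_cast Nat.cast_le.mpr hcard2) _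

lemma ae_block_bound {d : ℕ} (F : (Fin d → ℝ) → ℂ) :
    ∀ᵐ y : Fin d → ℝ, (‖F y‖₊ : ℝ≥0∞) ≤ blockNorm d ∞ F (fun i => ⌊y i⌋) := by
  have h1 : ∀ k : Fin d → ℤ, ∀ᵐ y : Fin d → ℝ,
      (‖(block d k).indicator F y‖₊ : ℝ≥0∞) ≤ blockNorm d ∞ F k := by
    intro k
    have := ae_le_eLpNormEssSup (f := (block d k).indicator F) (μ := volume)
    simpa [blockNorm, eLpNorm_exponent_top, enorm_eq_nnnorm] using this
  rw [← ae_all_iff] at h1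
  filter_upwards [h1] with y hy
  have hmem : y ∈ block d (fun i => ⌊y i⌋) :=
    fun i => ⟨Int.floor_le _, Int.lt_floor_add_one _⟩
  have := hy (fun i => ⌊y i⌋)
  rwa [Set.indicator_of_mem hmem] at this

lemma fiber_bound {d : ℕ} {a : ℝ} (ha : 0 < a) (x : Fin d → ℝ) (m : Fin d → ℤ) :
    ∃ s : Finset (Fin d → ℤ),
      {k : Fin d → ℤ | (fun i => ⌊x i - a * (k i : ℝ)⌋) = m} ⊆ ↑s ∧
      s.card ≤ (⌊1/a⌋₊ + 1) ^ d := by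
  classical
  refine ⟨Fintype.piFinset
    (fun i => Finset.Ioc ⌊(x i - (m i : ℝ) - 1)/a⌋ ⌊(x i - (m i : ℝ))/a⌋), ?_, ?_⟩
  · intro k hk
    simp only [Set.mem_setOf_eq] at hk
    rw [Finset.mem_coe, Fintype.mem_piFinset]
    intro i
    have hki : ⌊x i - a * (k i : ℝ)⌋ = m i := congrFun hk i
    have hlow : (m i : ℝ) ≤ x i - a * k i := by rw [← hki]; exact Int.floor_le _
    have hup : x i - a * k i < (m i : ℝ) + 1 := by
      rw [← hki]; exact Int.lt_floor_add_one _
    rw [Finset.mem_Ioc]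
    constructor
    · rw [Int.floor_lt]
      rw [div_lt_iff₀ ha]
      nlinarith
    · rw [Int.le_floor]
      rw [le_div_iff₀ ha]
      nlinarith
  · rw [Fintype.card_piFinset]
    calc ∏ i, (Finset.Ioc ⌊(x i - (m i : ℝ) - 1)/a⌋ ⌊(x i - (m i : ℝ))/a⌋).card
        ≤ ∏ _i : Fin d, (⌊1/a⌋₊ + 1) := by
          refine Finset.prod_le_prod' (fun i _ => ?_)
          rw [Int.card_Ioc]
          rw [Int.toNat_le]
          have key : (x i - (m i : ℝ))/a < (⌊(x i - (m i : ℝ) - 1)/a⌋ : ℝ) + (⌊1/a⌋₊ : ℝ) + 2 := by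
            have h1 : (x i - (m i : ℝ))/a = (x i - (m i : ℝ) - 1)/a + 1/a := by
              field_simp
              ring
            have h2 : (x i - (m i : ℝ) - 1)/a < (⌊(x i - (m i : ℝ) - 1)/a⌋ : ℝ) + 1 :=
              Int.lt_floor_add_one _
            have h3 : 1/a < (⌊1/a⌋₊ : ℝ) + 1 := Nat.lt_floor_add_one _
            linarith
          have : ⌊(x i - (m i : ℝ))/a⌋ < ⌊(x i - (m i : ℝ) - 1)/a⌋ + (⌊1/a⌋₊ : ℤ) + 2 := by
            rw [Int.floor_lt]
            push_cast
            linarith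
          push_cast
          omega
      _ = (⌊1/a⌋₊ + 1) ^ d := by
          rw [Finset.prod_const, Finset.card_univ, Fintype.card_fin]

lemma unif_bound {d : ℕ} (g γ : (Fin d → ℝ) → ℂ)
    (hWg : wienerNorm d g < ∞) (hWγ : wienerNorm d γ < ∞)
    (hip : (∫ t, γ t * (starRingEnd ℂ) (g t)) ≠ 0) :
    ∃ C : NNReal, ∀ a : ℝ, a ∈ Set.Ioc (0:ℝ) 1 →
      ∀ᵐ x : Fin d → ℝ, ‖Ga g γ a x - 1‖ ≤ C := by
  classical
  set I : ℂ := ∫ t, γ t * (starRingEnd ℂ) (g t) with hI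
  have hnI : 0 < ‖I‖ := norm_pos_iff.mpr hip
  set W : ℝ≥0∞ := wienerNorm d g * wienerNorm d γ with hWdef
  have hWne : W ≠ ∞ := ENNReal.mul_ne_top hWg.ne hWγ.ne
  set M : ℝ≥0∞ := 1 + ENNReal.ofReal (2^d / ‖I‖) * W with hM
  have hMne : M ≠ ∞ := by
    simp only [hM]
    exact ENNReal.add_ne_top.mpr ⟨one_ne_top, ENNReal.mul_ne_top ofReal_ne_top hWne⟩
  refine ⟨M.toNNReal, fun a ha => ?_⟩
  obtain ⟨ha0, ha1⟩ := ha
  have hgk : ∀ k : Fin d → ℤ, ∀ᵐ x : Fin d → ℝ,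
      (‖g (x - a • zVec k)‖₊ : ℝ≥0∞) ≤ blockNorm d ∞ g (fun i => ⌊(x - a • zVec k) i⌋) :=
    fun k => (measurePreserving_sub_right volume (a • zVec k)).quasiMeasurePreserving.ae
      (ae_block_bound g)
  have hγk : ∀ k : Fin d → ℤ, ∀ᵐ x : Fin d → ℝ,
      (‖γ (x - a • zVec k)‖₊ : ℝ≥0∞) ≤ blockNorm d ∞ γ (fun i => ⌊(x - a • zVec k) i⌋) :=
    fun k => (measurePreserving_sub_right volume (a • zVec k)).quasiMeasurePreserving.ae
      (ae_block_bound γ)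
  rw [← ae_all_iff] at hgk hγk
  filter_upwards [hgk, hγk] with x hgx hγx
  suffices h : (‖Ga g γ a x - 1‖₊ : ℝ≥0∞) ≤ M by
    have h2 : ‖Ga g γ a x - 1‖₊ ≤ M.toNNReal := by
      rw [← ENNReal.coe_le_coe, ENNReal.coe_toNNReal hMne]; exact h
    calc ‖Ga g γ a x - 1‖ = (‖Ga g γ a x - 1‖₊ : ℝ) := rfl
      _ ≤ (M.toNNReal : ℝ) := NNReal.coe_le_coe.mpr h2
  have harg : ∀ k : Fin d → ℤ, ∀ i, (x - a • zVec k) i = x i - a * (k i : ℝ) := by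
    intro k i; simp [zVec]
  set φ : (Fin d → ℤ) → (Fin d → ℤ) := fun k => fun i => ⌊x i - a * (k i : ℝ)⌋ with hφ
  have hfl : ∀ k : Fin d → ℤ, (fun i => ⌊(x - a • zVec k) i⌋) = φ k := by
    intro k; funext i; rw [harg k i]
  set N : ℕ := (⌊1/a⌋₊ + 1) ^ d with hN
  have hsum : (‖∑' k : Fin d → ℤ, (starRingEnd ℂ) (g (x - a • zVec k)) * γ (x - a • zVec k)‖₊ : ℝ≥0∞)
      ≤ N * W := by
    calc (‖∑' k : Fin d → ℤ, (starRingEnd ℂ) (g (x - a • zVec k)) * γ (x - a • zVec k)‖₊ : ℝ≥0∞)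
        ≤ ∑' k : Fin d → ℤ, (‖(starRingEnd ℂ) (g (x - a • zVec k)) * γ (x - a • zVec k)‖₊ : ℝ≥0∞) :=
          enorm_tsum_le _
      _ ≤ ∑' k : Fin d → ℤ, blockNorm d ∞ g (φ k) * blockNorm d ∞ γ (φ k) := by
          refine ENNReal.tsum_le_tsum (fun k => ?_)
          have : (‖(starRingEnd ℂ) (g (x - a • zVec k)) * γ (x - a • zVec k)‖₊ : ℝ≥0∞)
              = (‖g (x - a • zVec k)‖₊ : ℝ≥0∞) * (‖γ (x - a • zVec k)‖₊ : ℝ≥0∞) := by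
            rw [nnnorm_mul]; push_cast; simp
          rw [this]
          exact mul_le_mul' (by rw [← hfl k]; exact hgx k) (by rw [← hfl k]; exact hγx k)
      _ ≤ N * ∑' m : Fin d → ℤ, blockNorm d ∞ g m * blockNorm d ∞ γ m :=
          tsum_comp_le φ _ N (fun m => fiber_bound ha0 x m)
      _ ≤ N * W := by
          refine mul_le_mul_right ?_ _
          calc ∑' m : Fin d → ℤ, blockNorm d ∞ g m * blockNorm d ∞ γ m
              ≤ ∑' m : Fin d → ℤ, blockNorm d ∞ g m * wienerNorm d γ :=
                ENNReal.tsum_le_tsum (fun m => mul_le_mul_right (ENNReal.le_tsum m) _)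
            _ = W := by rw [ENNReal.tsum_mul_right]; rfl
  have hq : ((‖(a:ℂ)^d / I‖₊ : ℝ≥0∞)) = ENNReal.ofReal (a^d / ‖I‖) := by
    rw [← enorm_eq_nnnorm, ← ofReal_norm]
    have : ‖(a:ℂ)^d / I‖ = a^d / ‖I‖ := by
      rw [norm_div, norm_pow, Complex.norm_real, Real.norm_eq_abs, abs_of_pos ha0]
    rw [this]
  have hGa : (‖Ga g γ a x‖₊ : ℝ≥0∞) ≤ ENNReal.ofReal (2^d / ‖I‖) * W := by
    rw [Ga, nnnorm_mul, ENNReal.coe_mul, ← hI, hq]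
    calc ENNReal.ofReal (a^d / ‖I‖) *
          (‖∑' k : Fin d → ℤ, (starRingEnd ℂ) (g (x - a • zVec k)) * γ (x - a • zVec k)‖₊ : ℝ≥0∞)
        ≤ ENNReal.ofReal (a^d / ‖I‖) * ((N : ℝ≥0∞) * W) := mul_le_mul_right hsum _
      _ = (ENNReal.ofReal (a^d / ‖I‖) * (N : ℝ≥0∞)) * W := by ring
      _ ≤ ENNReal.ofReal (2^d / ‖I‖) * W := by
          refine mul_le_mul_left ?_ _
          rw [← ENNReal.ofReal_natCast N, ← ENNReal.ofReal_mul (by positivity)]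
          refine ENNReal.ofReal_le_ofReal ?_
          rw [div_mul_eq_mul_div]
          have hfloor : (⌊1/a⌋₊ : ℝ) ≤ 1/a := Nat.floor_le (by positivity)
          have hkey : a * ((⌊1/a⌋₊ : ℝ) + 1) ≤ 2 := by
            have hinv : a * (1/a) = 1 := mul_one_div_cancel ha0.ne'
            nlinarith
          have hN2 : a ^ d * (N:ℝ) ≤ 2 ^ d := by
            have hcast : (N:ℝ) = ((⌊1/a⌋₊ : ℝ) + 1)^d := by rw [hN]; push_cast; ring
            rw [hcast, ← mul_pow]
            exact pow_le_pow_left₀ (by positivity) hkey d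
          gcongr
  calc (‖Ga g γ a x - 1‖₊ : ℝ≥0∞) ≤ (‖Ga g γ a x‖₊ : ℝ≥0∞) + 1 := by
        have := nnnorm_sub_le (Ga g γ a x) 1
        rw [nnnorm_one] at this
        exact_mod_cast this
    _ ≤ ENNReal.ofReal (2^d / ‖I‖) * W + 1 := add_le_add_left hGa _
    _ = M := by rw [hM, add_comm]

lemma Ga_measurable {d : ℕ} (g γ : (Fin d → ℝ) → ℂ) (hg : Measurable g) (hγ : Measurable γ)
    (a : ℝ) : Measurable (Ga g γ a) := by
  apply Measurable.const_mul
  apply measurable_tsum_complex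
  intro k
  have hsub : Measurable (fun x : Fin d → ℝ => x - a • zVec k) :=
    measurable_id.sub measurable_const
  have h1 : Measurable (fun x : Fin d → ℝ => (starRingEnd ℂ) (g (x - a • zVec k))) := by
    exact (Complex.continuous_conj).measurable.comp (hg.comp hsub)
  exact h1.mul (hγ.comp hsub)

/-- transference of the multiplier convergence from `L²` to `L^p`. -/
theorem stmt11 {d : ℕ} (g γ : (Fin d → ℝ) → ℂ) (hg : Measurable g) (hγ : Measurable γ)
    (hWg : wienerNorm d g < ∞) (hWγ : wienerNorm d γ < ∞)
    (hip : (∫ t, γ t * (starRingEnd ℂ) (g t)) ≠ 0)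
    (hL2 : ∀ h : (Fin d → ℝ) → ℂ, Measurable h → eLpNorm h 2 volume < ∞ →
      Filter.Tendsto (fun a : ℝ => eLpNorm (fun x => (Ga g γ a x - 1) * h x) 2 volume)
        (nhdsWithin 0 (Set.Ioi 0)) (nhds 0))
    (p : ℝ≥0∞) (hp : 1 ≤ p) (hp' : p ≠ ∞)
    (f : (Fin d → ℝ) → ℂ) (hf : Measurable f) (hfp : eLpNorm f p volume < ∞) :
    Filter.Tendsto (fun a : ℝ => eLpNorm (fun x => (Ga g γ a x - 1) * f x) p volume)
      (nhdsWithin 0 (Set.Ioi 0)) (nhds 0) := by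
  classical
  have hp0 : p ≠ 0 := (lt_of_lt_of_le zero_lt_one hp).ne'
  have hpt : 0 < p.toReal := ENNReal.toReal_pos hp0 hp'
  obtain ⟨C, hC⟩ := unif_bound g γ hWg hWγ hip
  have hGmeas : ∀ a : ℝ, Measurable (Ga g γ a) := Ga_measurable g γ hg hγ
  rw [ENNReal.tendsto_nhds_zero]
  intro ε hε
  set ε₀ : ℝ≥0∞ := min ε 1 with hε₀def
  have hε₀pos : 0 < ε₀ := lt_min hε zero_lt_one
  have hε₀ne : ε₀ ≠ ∞ := ((min_le_right ε 1).trans_lt one_lt_top).ne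
  have hε₀le : ε₀ ≤ ε := min_le_left _ _
  have hε₀2 : (0:ℝ≥0∞) < ε₀ / 2 := ENNReal.div_pos hε₀pos.ne' ENNReal.ofNat_ne_top
  set δ : ℝ≥0∞ := (ε₀ / 2) / ((C:ℝ≥0∞) + 1) with hδ
  have hδpos : δ ≠ 0 :=
    (ENNReal.div_pos hε₀2.ne' (by exact ENNReal.add_ne_top.mpr ⟨ENNReal.coe_ne_top, one_ne_top⟩)).ne'
  have hfmem : MemLp f p volume := ⟨hf.aestronglyMeasurable, hfp⟩
  obtain ⟨s, hscl, hsmem⟩ := hfmem.exists_simpleFunc_eLpNorm_sub_lt hp' hδpos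
  set s' : (Fin d → ℝ) → ℂ := ⇑s with hs'
  have hfin : s.FinMeasSupp volume := (SimpleFunc.memLp_iff_finMeasSupp hp0 hp').mp hsmem
  have hs2 : MemLp s' 2 volume :=
    (SimpleFunc.memLp_iff_finMeasSupp two_ne_zero ENNReal.ofNat_ne_top).mpr hfin
  have hconv2 := hL2 s' s.measurable hs2.2
  set T : Set (Fin d → ℝ) := Function.support s' with hT
  have hTmeas : MeasurableSet T := by
    have : T = s' ⁻¹' ({0}ᶜ) := by
      ext x; simp [hT, Function.mem_support]
    rw [this]
    exact s.measurable (measurableSet_singleton 0).compl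
  have hTfin : volume T < ∞ := SimpleFunc.finMeasSupp_iff_support.mp hfin
  obtain ⟨B, hB⟩ := s.exists_forall_norm_le
  set u : ℝ → (Fin d → ℝ) → ℂ := fun a x => (Ga g γ a x - 1) * s' x with hu
  have humeas : ∀ a, Measurable (u a) :=
    fun a => ((hGmeas a).sub measurable_const).mul s.measurable
  -- Term 1: the simple-function part tends to 0 in L^p (eventually below ε₀/2)
  have hterm1 : ∀ᶠ a in nhdsWithin (0:ℝ) (Set.Ioi 0),
      eLpNorm (u a) p volume ≤ ε₀ / 2 := by
    by_cases hple : p ≤ 2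
    · -- low exponent : Hölder on the finite-measure support
      set e : ℝ := 1 / p.toReal - 1 / (2:ℝ≥0∞).toReal with he
      have he0 : 0 ≤ e := by
        rw [he, ENNReal.toReal_ofNat, sub_nonneg]
        exact one_div_le_one_div_of_le hpt (ENNReal.toReal_mono ENNReal.ofNat_ne_top hple)
      set K : ℝ≥0∞ := (volume T) ^ e with hK
      have hKne : K ≠ ∞ := (ENNReal.rpow_lt_top_of_nonneg he0 hTfin.ne).ne
      have hbound : ∀ a : ℝ, eLpNorm (u a) p volume ≤ eLpNorm (u a) 2 volume * K := by
        intro a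
        have hind : u a = T.indicator (u a) := by
          funext x
          by_cases hx : x ∈ T
          · rw [Set.indicator_of_mem hx]
          · rw [Set.indicator_of_notMem hx, hu]
            have : s' x = 0 := Function.notMem_support.mp hx
            simp [this]
        calc eLpNorm (u a) p volume = eLpNorm (u a) p (volume.restrict T) := by
              conv_lhs => rw [hind]
              rw [eLpNorm_indicator_eq_eLpNorm_restrict hTmeas]
          _ ≤ eLpNorm (u a) 2 (volume.restrict T) *
                (volume.restrict T) Set.univ ^ (1 / p.toReal - 1 / (2:ℝ≥0∞).toReal) :=
              eLpNorm_le_eLpNorm_mul_rpow_measure_univ hple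
                (humeas a).aestronglyMeasurable
          _ ≤ eLpNorm (u a) 2 volume * K := by
              rw [Measure.restrict_apply_univ]
              exact mul_le_mul' (eLpNorm_mono_measure _ Measure.restrict_le_self) le_rfl
      have hηpos : (0:ℝ≥0∞) < (ε₀/2) / (K + 1) :=
        ENNReal.div_pos hε₀2.ne' (ENNReal.add_ne_top.mpr ⟨hKne, one_ne_top⟩)
      filter_upwards [ENNReal.tendsto_nhds_zero.mp hconv2 _ hηpos] with a h2a
      calc eLpNorm (u a) p volume ≤ eLpNorm (u a) 2 volume * K := hbound a
        _ ≤ ((ε₀/2) / (K + 1)) * (K + 1) := mul_le_mul' h2a (le_self_add)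
        _ ≤ ε₀ / 2 := by rw [mul_comm]; exact ENNReal.mul_div_le
    · -- high exponent : uniform bound interpolation
      have hp2 : (2:ℝ≥0∞) ≤ p := le_of_not_ge hple
      have hpt2 : 2 ≤ p.toReal := by
        have := ENNReal.toReal_mono hp' hp2
        simpa [ENNReal.toReal_ofNat] using this
      set D : ℝ≥0∞ := (C:ℝ≥0∞) * ENNReal.ofReal B + 1 with hD
      have hD0 : D ≠ 0 := by simp [hD]
      have hDne : D ≠ ∞ := by
        simp only [hD]
        exact ENNReal.add_ne_top.mpr
          ⟨ENNReal.mul_ne_top ENNReal.coe_ne_top ofReal_ne_top, one_ne_top⟩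
      have hDb : ∀ a : ℝ, a ∈ Set.Ioc (0:ℝ) 1 →
          ∀ᵐ x : Fin d → ℝ, (‖u a x‖₊ : ℝ≥0∞) ≤ D := by
        intro a ha
        filter_upwards [hC a ha] with x hx
        calc (‖u a x‖₊ : ℝ≥0∞) = ENNReal.ofReal (‖Ga g γ a x - 1‖ * ‖s' x‖) := by
              rw [hu, ← norm_mul, ofReal_norm]
              rfl
          _ ≤ ENNReal.ofReal ((C:ℝ) * B) := by
              refine ENNReal.ofReal_le_ofReal ?_
              exact mul_le_mul hx (hB x) (norm_nonneg _) C.coe_nonneg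
          _ = (C:ℝ≥0∞) * ENNReal.ofReal B := by
              rw [ENNReal.ofReal_mul C.coe_nonneg, ENNReal.ofReal_coe_nnreal]
          _ ≤ D := by rw [hD]; exact le_self_add
      have hmain : ∀ a : ℝ, a ∈ Set.Ioc (0:ℝ) 1 →
          eLpNorm (u a) p volume ≤
            (D ^ (p.toReal - 2) * (eLpNorm (u a) 2 volume) ^ (2:ℝ)) ^ (1/p.toReal) := by
        intro a ha
        rw [eLpNorm_eq_lintegral_rpow_enorm_toReal hp0 hp']
        refine ENNReal.rpow_le_rpow ?_ (by positivity)
        calc ∫⁻ x, (‖u a x‖₊ : ℝ≥0∞) ^ p.toReal ∂volume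
            ≤ ∫⁻ x, D ^ (p.toReal - 2) * (‖u a x‖₊ : ℝ≥0∞) ^ (2:ℝ) ∂volume := by
              refine lintegral_mono_ae ?_
              filter_upwards [hDb a ha] with x hx
              have h1 : (‖u a x‖₊ : ℝ≥0∞) ^ p.toReal
                  = (‖u a x‖₊ : ℝ≥0∞) ^ (p.toReal - 2) * (‖u a x‖₊ : ℝ≥0∞) ^ (2:ℝ) := by
                rw [← ENNReal.rpow_add_of_nonneg _ _ (by linarith) (by norm_num)]
                congr 1; ring
              rw [h1]
              exact mul_le_mul' (ENNReal.rpow_le_rpow hx (by linarith)) le_rfl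
          _ = D ^ (p.toReal - 2) * ∫⁻ x, (‖u a x‖₊ : ℝ≥0∞) ^ (2:ℝ) ∂volume :=
              lintegral_const_mul' _ _ (ENNReal.rpow_lt_top_of_nonneg (by linarith) hDne).ne
          _ = D ^ (p.toReal - 2) * (eLpNorm (u a) 2 volume) ^ (2:ℝ) := by
              rw [eLpNorm_eq_lintegral_rpow_enorm_toReal two_ne_zero ENNReal.ofNat_ne_top, ← ENNReal.rpow_mul]
              norm_num [ENNReal.toReal_ofNat]
              rfl
      set η : ℝ≥0∞ := ((ε₀/2) ^ p.toReal / D ^ (p.toReal - 2)) ^ ((2:ℝ)⁻¹) with hη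
      have hηpos : 0 < η := by
        rw [hη]
        refine ENNReal.rpow_pos ?_ ?_
        · exact ENNReal.div_pos
            (by
              refine (ENNReal.rpow_pos hε₀2 ?_).ne'
              exact (ENNReal.div_lt_top hε₀ne two_ne_zero).ne)
            (ENNReal.rpow_lt_top_of_nonneg (by linarith) hDne).ne
        · exact (ENNReal.div_lt_top
            (ENNReal.rpow_lt_top_of_nonneg (by positivity)
              (ENNReal.div_lt_top hε₀ne two_ne_zero).ne).ne
            (by
              refine (ENNReal.rpow_pos (by simpa [pos_iff_ne_zero] using hD0) hDne).ne')).ne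
      have hIoc : Set.Ioc (0:ℝ) 1 ∈ nhdsWithin (0:ℝ) (Set.Ioi 0) :=
        Ioc_mem_nhdsGT_of_mem ⟨le_rfl, zero_lt_one⟩
      filter_upwards [ENNReal.tendsto_nhds_zero.mp hconv2 η hηpos, hIoc] with a h2a haI
      calc eLpNorm (u a) p volume
          ≤ (D ^ (p.toReal - 2) * (eLpNorm (u a) 2 volume) ^ (2:ℝ)) ^ (1/p.toReal) :=
            hmain a haI
        _ ≤ (D ^ (p.toReal - 2) * η ^ (2:ℝ)) ^ (1/p.toReal) := by
            refine ENNReal.rpow_le_rpow (mul_le_mul' le_rfl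
              (ENNReal.rpow_le_rpow h2a (by norm_num))) (by positivity)
        _ ≤ ε₀ / 2 := by
            rw [hη, ← ENNReal.rpow_mul]
            rw [show ((2:ℝ)⁻¹ * 2) = 1 by norm_num, ENNReal.rpow_one]
            calc (D ^ (p.toReal - 2) * ((ε₀/2) ^ p.toReal / D ^ (p.toReal - 2))) ^ (1/p.toReal)
                ≤ ((ε₀/2) ^ p.toReal) ^ (1/p.toReal) :=
                  ENNReal.rpow_le_rpow ENNReal.mul_div_le (by positivity)
              _ = ε₀ / 2 := by
                  rw [← ENNReal.rpow_mul, mul_one_div_cancel hpt.ne', ENNReal.rpow_one]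
  -- Combine
  have hIoc : Set.Ioc (0:ℝ) 1 ∈ nhdsWithin (0:ℝ) (Set.Ioi 0) :=
    Ioc_mem_nhdsGT_of_mem ⟨le_rfl, zero_lt_one⟩
  filter_upwards [hterm1, hIoc] with a h1 haI
  have hterm2 : eLpNorm (fun x => (Ga g γ a x - 1) * (f x - s' x)) p volume ≤ ε₀ / 2 := by
    have hae : ∀ᵐ x : Fin d → ℝ,
        ‖(Ga g γ a x - 1) * (f x - s' x)‖₊ ≤ C * ‖f x - s' x‖₊ := by
      filter_upwards [hC a haI] with x hx
      rw [nnnorm_mul]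
      refine mul_le_mul' ?_ le_rfl
      rw [← NNReal.coe_le_coe, coe_nnnorm]
      exact hx
    have hle := eLpNorm_le_nnreal_smul_eLpNorm_of_ae_le_mul hae p
    have heq : (fun x => f x - s' x) = f - s' := rfl
    calc eLpNorm (fun x => (Ga g γ a x - 1) * (f x - s' x)) p volume
        ≤ (C:ℝ≥0∞) * eLpNorm (fun x => f x - s' x) p volume := by
          simpa [ENNReal.smul_def, smul_eq_mul] using hle
      _ ≤ ((C:ℝ≥0∞) + 1) * δ := by
          refine mul_le_mul' le_self_add ?_
          rw [heq]
          exact hscl.le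
      _ ≤ ε₀ / 2 := by rw [hδ]; exact ENNReal.mul_div_le
  have hsplit : (fun x => (Ga g γ a x - 1) * f x)
      = (fun x => u a x) + (fun x => (Ga g γ a x - 1) * (f x - s' x)) := by
    funext x
    simp only [hu, Pi.add_apply]
    ring
  have hm2 : AEStronglyMeasurable (fun x => (Ga g γ a x - 1) * (f x - s' x)) volume :=
    (((hGmeas a).sub measurable_const).mul (hf.sub s.measurable)).aestronglyMeasurable
  calc eLpNorm (fun x => (Ga g γ a x - 1) * f x) p volume
      = eLpNorm ((fun x => u a x) + (fun x => (Ga g γ a x - 1) * (f x - s' x))) p volume := by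
        rw [hsplit]
    _ ≤ eLpNorm (u a) p volume
        + eLpNorm (fun x => (Ga g γ a x - 1) * (f x - s' x)) p volume :=
        eLpNorm_add_le (humeas a).aestronglyMeasurable hm2 hp
    _ ≤ ε₀ / 2 + ε₀ / 2 := add_le_add h1 hterm2
    _ = ε₀ := ENNReal.add_halves _
    _ ≤ ε := hε₀le
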